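/- For every complex number z, sin z = z · Σ_{n=0}^∞ (1 / ((2n+1) · n!)) · (z/2)^n · J_n(z), where J_n is the Bessel function of the first kind of integer order n. -/

import Mathlib

open Finset

/-- Bessel function of the first kind `J_n(z)` of nonnegative integer order. -/
noncomputable def besselJNat (n : ℕ) (z : ℂ) : ℂ :=
  ∑' m : ℕ, (-1 : ℂ) ^ m / ((n + m).factorial * m.factorial) * (z / 2) ^ (n + 2 * m)

lemma prod_odd_mul (k : ℕ) :
    (∏ j ∈ Finset.range (k+1), ((2*j+1 : ℕ) : ℂ)) * (2^k * (k.factorial : ℂ))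
      = ((2*k+1).factorial : ℂ) := by
  induction k with
  | zero => simp
  | succ k ih =>
    rw [Finset.prod_range_succ]
    have h2 : ((2*(k+1)+1).factorial : ℂ)
        = (2*(k:ℂ)+3) * ((2*(k:ℂ)+2) * ((2*k+1).factorial : ℂ)) := by
      have h3 : 2*(k+1)+1 = (2*k+1) + 1 + 1 := by ring
      rw [h3, Nat.factorial_succ, Nat.factorial_succ]
      push_cast
      ring
    have hc1 : ((2*(k+1)+1 : ℕ) : ℂ) = 2*(k:ℂ)+3 := by push_cast; ring
    have hc2 : ((k+1).factorial : ℂ) = ((k:ℂ)+1) * (k.factorial : ℂ) := by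
      rw [Nat.factorial_succ]; push_cast; ring
    rw [h2, hc1, hc2]
    linear_combination ((2*(k:ℂ)+3)*(2*(k:ℂ)+2)) * ih

lemma partial_frac : ∀ (k : ℕ) (x : ℂ), (∀ j ∈ Finset.range (k+1), x + j ≠ 0) →
    ∑ n ∈ Finset.range (k+1), (-1:ℂ)^n * (k.choose n) / (x + n)
      = (k.factorial : ℂ) / ∏ j ∈ Finset.range (k+1), (x + j) := by
  intro k
  induction k with
  | zero => intro x hx; simp
  | succ k ih =>
    intro x hx
    have hx0 : x ≠ 0 := by simpa using hx 0 (by simp)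
    have hx1 : ∀ j ∈ Finset.range (k+1), (x+1) + (j:ℂ) ≠ 0 := by
      intro j hj
      have h2 : (x+1) + (j:ℂ) = x + ((j+1 : ℕ) : ℂ) := by push_cast; ring
      rw [h2]
      exact hx (j+1) (Finset.mem_range.2 (by simp at hj; omega))
    have hx' : ∀ j ∈ Finset.range (k+1), x + (j:ℂ) ≠ 0 := fun j hj =>
      hx j (Finset.mem_range.2 (by simp at hj; omega))
    have e1 := ih x hx'
    have e2 := ih (x+1) hx1
    have hA : ∑ n ∈ Finset.range (k+2), (-1:ℂ)^n * ((k+1).choose n) / (x+n)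
        = (∑ n ∈ Finset.range (k+1), (-1:ℂ)^n * (k.choose n) / (x+n))
          - ∑ n ∈ Finset.range (k+1), (-1:ℂ)^n * (k.choose n) / ((x+1)+n) := by
      rw [Finset.sum_range_succ']
      have hterm : ∀ i ∈ Finset.range (k+1),
          (-1:ℂ)^(i+1) * (((k+1).choose (i+1) : ℕ) : ℂ) / (x + ((i+1 : ℕ) : ℂ))
            = (-1:ℂ)^(i+1) * ((k.choose (i+1) : ℕ) : ℂ) / (x + ((i+1 : ℕ) : ℂ))
              - (-1:ℂ)^i * ((k.choose i : ℕ) : ℂ) / ((x+1) + (i:ℂ)) := by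
        intro i hi
        have hc : (((k+1).choose (i+1) : ℕ) : ℂ)
            = ((k.choose i : ℕ) : ℂ) + ((k.choose (i+1) : ℕ) : ℂ) := by
          rw [Nat.choose_succ_succ]; push_cast; ring
        have hd : x + ((i+1 : ℕ) : ℂ) = (x+1) + (i:ℂ) := by push_cast; ring
        rw [hc, hd]
        ring
      rw [Finset.sum_congr rfl hterm, Finset.sum_sub_distrib]
      have hB : (∑ i ∈ Finset.range (k+1), (-1:ℂ)^(i+1) * ((k.choose (i+1) : ℕ) : ℂ) / (x + ((i+1 : ℕ) : ℂ)))
            + (-1:ℂ)^0 * (((k+1).choose 0 : ℕ) : ℂ) / (x + ((0:ℕ) : ℂ))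
          = ∑ n ∈ Finset.range (k+1), (-1:ℂ)^n * (k.choose n) / (x+n) := by
        rw [Finset.sum_range_succ]
        simp [Nat.choose_succ_self]
        rw [Finset.sum_range_succ']
        simp
      linear_combination hB
    have hprodd1 : ∏ j ∈ Finset.range (k+2), (x + (j:ℂ))
        = x * ∏ j ∈ Finset.range (k+1), ((x+1) + (j:ℂ)) := by
      rw [Finset.prod_range_succ']
      have hcg : ∀ i ∈ Finset.range (k+1), x + ((i+1:ℕ):ℂ) = (x+1) + (i:ℂ) := by
        intro i _; push_cast; ring
      rw [Finset.prod_congr rfl hcg]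
      push_cast; ring
    have hP : (∏ j ∈ Finset.range (k+1), (x + (j:ℂ))) ≠ 0 :=
      Finset.prod_ne_zero_iff.2 hx'
    have hQ : (∏ j ∈ Finset.range (k+1), ((x+1) + (j:ℂ))) ≠ 0 :=
      Finset.prod_ne_zero_iff.2 hx1
    have hxQ : x * (∏ j ∈ Finset.range (k+1), ((x+1) + (j:ℂ)))
        = (∏ j ∈ Finset.range (k+1), (x + (j:ℂ))) * (x + ((k+1:ℕ):ℂ)) := by
      rw [← hprodd1, Finset.prod_range_succ]
    have hfc : ((k+1).factorial : ℂ) = ((k:ℂ)+1) * (k.factorial : ℂ) := by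
      rw [Nat.factorial_succ]; push_cast; ring
    rw [show k+1+1 = k+2 from rfl] at hx ⊢
    rw [hA, e1, e2, hfc, hprodd1]
    rw [div_sub_div _ _ hP hQ, div_eq_div_iff (mul_ne_zero hP hQ) (mul_ne_zero hx0 hQ)]
    push_cast at hxQ ⊢
    linear_combination ((k.factorial : ℂ) * (∏ j ∈ Finset.range (k+1), ((x+1) + (j:ℂ)))) * hxQ

lemma key_sum (k : ℕ) :
    ∑ n ∈ Finset.range (k+1), (-1:ℂ)^n * (k.choose n) / (2*(n:ℂ)+1)
      = 4^k * ((k.factorial : ℂ))^2 / ((2*k+1).factorial : ℂ) := by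
  have hx : ∀ j ∈ Finset.range (k+1), (1/2 : ℂ) + (j:ℂ) ≠ 0 := by
    intro j _
    have h1 : (1/2 : ℂ) + j = ((2*j+1 : ℕ) : ℂ)/2 := by push_cast; ring
    rw [h1]
    exact div_ne_zero (Nat.cast_ne_zero.2 (by omega)) two_ne_zero
  have h := partial_frac k (1/2) hx
  have hterm : ∀ n ∈ Finset.range (k+1),
      (-1:ℂ)^n * (k.choose n) / (2*(n:ℂ)+1)
        = (1/2 : ℂ) * ((-1:ℂ)^n * (k.choose n) / ((1/2:ℂ)+(n:ℂ))) := by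
    intro n hn
    have h1rw : (1/2:ℂ)+(n:ℂ) = (2*(n:ℂ)+1)/2 := by ring
    rw [h1rw, div_div_eq_mul_div]
    ring
  rw [Finset.sum_congr rfl hterm, ← Finset.mul_sum, h]
  have hprodeq : ∏ j ∈ Finset.range (k+1), ((1/2:ℂ) + (j:ℂ))
      = (∏ j ∈ Finset.range (k+1), ((2*j+1 : ℕ) : ℂ)) / 2^(k+1) := by
    have hcg : ∀ j ∈ Finset.range (k+1), (1/2:ℂ) + (j:ℂ) = ((2*j+1 : ℕ) : ℂ)/(2:ℂ) := by
      intro j _; push_cast; ring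
    rw [Finset.prod_congr rfl hcg, Finset.prod_div_distrib, Finset.prod_const, Finset.card_range]
  have hodd := prod_odd_mul k
  have hoddne : (∏ j ∈ Finset.range (k+1), ((2*j+1 : ℕ) : ℂ)) ≠ 0 :=
    Finset.prod_ne_zero_iff.2 (fun j _ => Nat.cast_ne_zero.2 (by omega))
  have h2k : ((2*k+1).factorial : ℂ) ≠ 0 := Nat.cast_ne_zero.2 (Nat.factorial_ne_zero _)
  rw [hprodeq, div_div_eq_mul_div]
  rw [show (1/2:ℂ) * ((k.factorial:ℂ) * 2^(k+1) / (∏ j ∈ Finset.range (k+1), ((2*j+1 : ℕ) : ℂ)))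
      = ((k.factorial:ℂ) * 2^k) / (∏ j ∈ Finset.range (k+1), ((2*j+1 : ℕ) : ℂ)) from by ring]
  rw [div_eq_div_iff hoddne h2k]
  rw [show (4:ℂ)^k = 2^k * 2^k from by rw [← mul_pow]; norm_num]
  linear_combination (-(k.factorial : ℂ) * 2^k) * hodd

/-- The single-term identity on the antidiagonal. -/
lemma term_eq (z : ℂ) (k : ℕ) : ∀ p ∈ Finset.HasAntidiagonal.antidiagonal k,
    (1 / (((2 * p.1 + 1 : ℕ) : ℂ) * p.1.factorial) * (z / 2) ^ p.1 *
      ((-1 : ℂ) ^ p.2 / (((p.1 + p.2).factorial : ℂ) * (p.2.factorial : ℂ)) *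
        (z / 2) ^ (p.1 + 2 * p.2)))
    = ((-1:ℂ)^k * (z/2)^(2*k) / ((k.factorial : ℂ))^2)
        * ((-1:ℂ)^p.1 * (k.choose p.1) / (2*(p.1:ℂ)+1)) := by
  rintro ⟨n, m⟩ hp
  rw [Finset.HasAntidiagonal.mem_antidiagonal] at hp
  subst hp
  set w : ℂ := z/2 with hw
  have hpow : w^n * w^(n+2*m) = w^(2*(n+m)) := by
    rw [← pow_add]; congr 1; omega
  have hneg : (-1:ℂ)^(n+m) * (-1:ℂ)^n = (-1:ℂ)^m := by
    rw [← pow_add]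
    rw [show n + m + n = m + 2*n from by omega, pow_add, pow_mul]
    norm_num
  have hch : (((n+m).choose n : ℕ) : ℂ) * ((n.factorial:ℂ) * (m.factorial:ℂ))
      = ((n+m).factorial : ℂ) := by
    have h1 := Nat.add_choose_mul_factorial_mul_factorial n m
    have h2 : (n+m).choose n = (n+m).choose m := by
      rw [← Nat.choose_symm (Nat.le_add_right n m)]
      congr 1
      omega
    rw [h2]
    push_cast [← h1]
    ring
  have h2n : ((2*n+1 : ℕ) : ℂ) = 2*(n:ℂ)+1 := by push_cast; ring
  have hne1 : (2*(n:ℂ)+1) ≠ 0 := by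
    rw [← h2n]; exact Nat.cast_ne_zero.2 (by omega)
  have hne2 : (n.factorial : ℂ) ≠ 0 := Nat.cast_ne_zero.2 (Nat.factorial_ne_zero _)
  have hne3 : (m.factorial : ℂ) ≠ 0 := Nat.cast_ne_zero.2 (Nat.factorial_ne_zero _)
  have hne4 : (((n+m).factorial : ℕ) : ℂ) ≠ 0 := Nat.cast_ne_zero.2 (Nat.factorial_ne_zero _)
  have hs : ((-1:ℂ))^(n*2) = 1 := by
    rw [Nat.mul_comm, pow_mul]; norm_num
  rw [h2n]
  field_simp
  linear_combination ((-1:ℂ)^m * ((n+m).factorial : ℂ)) * hpow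
    - (w^(2*(n+m)) * ((-1:ℂ)^(n+m) * (-1:ℂ)^n)) * hch
    - (w^(2*(n+m)) * ((n+m).factorial : ℂ)) * hneg

lemma antidiag_sum (z : ℂ) (k : ℕ) :
    (∑ p ∈ Finset.HasAntidiagonal.antidiagonal k,
      (1 / (((2 * p.1 + 1 : ℕ) : ℂ) * p.1.factorial) * (z / 2) ^ p.1 *
        ((-1 : ℂ) ^ p.2 / (((p.1 + p.2).factorial : ℂ) * (p.2.factorial : ℂ)) *
          (z / 2) ^ (p.1 + 2 * p.2))))
      = (-1:ℂ)^k * 4^k / (((2*k+1).factorial : ℂ)) * (z/2)^(2*k) := by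
  rw [Finset.sum_congr rfl (term_eq z k), ← Finset.mul_sum,
    Finset.Nat.sum_antidiagonal_eq_sum_range_succ_mk, key_sum k]
  have hne1 : ((k.factorial : ℂ)) ≠ 0 := Nat.cast_ne_zero.2 (Nat.factorial_ne_zero _)
  have hne2 : (((2*k+1).factorial : ℕ) : ℂ) ≠ 0 := Nat.cast_ne_zero.2 (Nat.factorial_ne_zero _)
  field_simp


set_option maxHeartbeats 1000000 in
/-- Expansion of the sine function in terms of Bessel functions:
`sin z = z · Σ_{n=0}^∞ (z/2)^n J_n(z) / ((2n+1) n!)`. -/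
theorem sin_eq_besselJ_sum (z : ℂ) :
    Complex.sin z =
      z * ∑' n : ℕ, 1 / (((2 * n + 1 : ℕ) : ℂ) * n.factorial) * (z / 2) ^ n * besselJNat n z := by
  set f : ℕ × ℕ → ℂ := fun p =>
    1 / (((2 * p.1 + 1 : ℕ) : ℂ) * p.1.factorial) * (z / 2) ^ p.1 *
      ((-1 : ℂ) ^ p.2 / (((p.1 + p.2).factorial : ℂ) * (p.2.factorial : ℂ)) *
        (z / 2) ^ (p.1 + 2 * p.2)) with hf_def
  have hnorm : ∀ p : ℕ × ℕ,
      ‖f p‖ ≤ (‖z/2‖^2)^p.1 / p.1.factorial * ((‖z/2‖^2)^p.2 / p.2.factorial) := by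
    rintro ⟨n, m⟩
    have hre : ‖f (n, m)‖ = 1 / ((((2*n+1 : ℕ)) : ℝ) * (n.factorial : ℝ)) * ‖z/2‖^n *
        (1 / (((n+m).factorial : ℝ) * (m.factorial : ℝ)) * ‖z/2‖^(n+2*m)) := by
      simp only [hf_def, norm_mul, norm_div, norm_pow, norm_neg, norm_one, one_pow,
        Complex.norm_natCast]
    rw [hre]
    have e1 : 1 / ((((2*n+1 : ℕ)) : ℝ) * (n.factorial : ℝ)) * ‖z/2‖^n *
        (1 / (((n+m).factorial : ℝ) * (m.factorial : ℝ)) * ‖z/2‖^(n+2*m))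
        = ‖z/2‖^(2*n+2*m) /
            (((n.factorial : ℝ) * (m.factorial : ℝ)) * ((((2*n+1 : ℕ)) : ℝ) * (((n+m).factorial : ℝ)))) := by
      ring
    have e2 : (‖z/2‖^2)^n / (n.factorial : ℝ) * ((‖z/2‖^2)^m / (m.factorial : ℝ))
        = ‖z/2‖^(2*n+2*m) / ((n.factorial : ℝ) * (m.factorial : ℝ)) := by
      ring
    rw [e1, e2]
    have h1 : (1:ℝ) ≤ (((2*n+1 : ℕ)) : ℝ) := by exact_mod_cast Nat.one_le_iff_ne_zero.2 (by omega)
    have h3 : (1:ℝ) ≤ (((n+m).factorial : ℕ) : ℝ) := by exact_mod_cast (n+m).factorial_pos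
    have hfp : (0:ℝ) < (n.factorial : ℝ) * (m.factorial : ℝ) := by positivity
    apply div_le_div_of_nonneg_left (by positivity) hfp
    have h14 : (1:ℝ) ≤ (((2*n+1 : ℕ)) : ℝ) * (((n+m).factorial : ℕ) : ℝ) := by nlinarith
    exact le_mul_of_one_le_right hfp.le h14
  have hgsum : Summable (fun p : ℕ × ℕ =>
      (‖z/2‖^2)^p.1 / p.1.factorial * ((‖z/2‖^2)^p.2 / p.2.factorial)) :=
    (Real.summable_pow_div_factorial _).mul_of_nonneg (Real.summable_pow_div_factorial _)
      (by intro n; positivity) (by intro n; positivity)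
  have hfsum : Summable f :=
    Summable.of_norm (hgsum.of_nonneg_of_le (fun p => norm_nonneg _) hnorm)
  have hinner : ∀ n : ℕ,
      (1 / (((2 * n + 1 : ℕ) : ℂ) * n.factorial) * (z / 2) ^ n * besselJNat n z)
        = ∑' m : ℕ, f (n, m) := by
    intro n
    rw [besselJNat, ← tsum_mul_left]
  have hstep1 : (∑' n : ℕ, 1 / (((2 * n + 1 : ℕ) : ℂ) * n.factorial) * (z / 2) ^ n * besselJNat n z)
      = ∑' p : ℕ × ℕ, f p := by
    rw [tsum_congr hinner]
    exact (Summable.tsum_prod' hfsum (fun n => hfsum.prod_factor n)).symm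
  have hstep2 : (∑' p : ℕ × ℕ, f p)
      = ∑' k : ℕ, ((-1:ℂ)^k * 4^k / (((2*k+1).factorial : ℂ)) * (z/2)^(2*k)) := by
    rw [← Finset.HasAntidiagonal.sigmaAntidiagonalEquivProd.tsum_eq f]
    refine Eq.trans (Summable.tsum_sigma' (fun k => (hasSum_fintype _).summable)
      (Finset.HasAntidiagonal.sigmaAntidiagonalEquivProd.summable_iff.2 hfsum)) ?_
    refine tsum_congr fun k => ?_
    exact (Finset.tsum_subtype _ fun p => f p).trans (antidiag_sum z k)
  have hfinal : ∀ k : ℕ, (-1:ℂ)^k * z^(2*k+1) / ((2*k+1).factorial : ℂ)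
      = z * ((-1:ℂ)^k * 4^k / (((2*k+1).factorial : ℂ)) * (z/2)^(2*k)) := by
    intro k
    have hne : (((2*k+1).factorial : ℕ) : ℂ) ≠ 0 := Nat.cast_ne_zero.2 (Nat.factorial_ne_zero _)
    have h4 : (4:ℂ)^k = 2^(2*k) := by rw [pow_mul]; norm_num
    rw [h4, div_pow]
    field_simp
    ring
  rw [Complex.sin_eq_tsum, hstep1, hstep2, ← tsum_mul_left]
  exact tsum_congr hfinal
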